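/- For real analytic F and a real analytic solution φ of φ'' = Q₁(φ) with (φ')² = Q(φ) and φ'(0)=0 (where Q₁ = (1/2)Q'), every derivative of odd order of the composite ψ(t) = F(φ(t)) vanishes at t = 0. -/

import Mathlib

open Set Filter Topology

theorem odd_derivatives_of_composite_vanish
    (F Q φ : ℝ → ℝ)
    (hF : AnalyticOn ℝ F Set.univ) (hQ : AnalyticOn ℝ Q Set.univ)
    (hφ : AnalyticOn ℝ φ Set.univ)
    (Q₁ : ℝ → ℝ) (hQ₁ : Q₁ = fun t => (1/2) * deriv Q t)
    (hinit : deriv φ 0 = 0)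
    (hODE : ∀ t, deriv (deriv φ) t = Q₁ (φ t))
    (hFI : ∀ t, (deriv φ t)^2 = Q (φ t)) :
    ∀ k : ℕ, 1 ≤ k → iteratedDeriv (2*k - 1) (F ∘ φ) 0 = 0 := by
  -- upgrade analyticity
  rw [isOpen_univ.analyticOn_iff_analyticOnNhd] at hQ hφ
  have hQ' : AnalyticOnNhd ℝ (deriv Q) Set.univ := hQ.deriv
  have hQ₁a : AnalyticOnNhd ℝ Q₁ Set.univ := by
    rw [hQ₁]; exact fun x hx => (analyticAt_const.mul (hQ' x hx))
  have hφ' : AnalyticOnNhd ℝ (deriv φ) Set.univ := hφ.deriv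
  have hφd : ∀ t : ℝ, HasDerivAt φ (deriv φ t) t := fun t =>
    ((hφ t trivial).differentiableAt).hasDerivAt
  have hφ'd : ∀ t : ℝ, HasDerivAt (deriv φ) (Q₁ (φ t)) t := fun t => by
    rw [← hODE t]; exact ((hφ' t trivial).differentiableAt).hasDerivAt
  -- the vector field
  set v : ℝ × ℝ → ℝ × ℝ := fun p => (p.2, Q₁ p.1) with hv
  set p₀ : ℝ × ℝ := (φ 0, deriv φ 0) with hp₀
  have hvC : ContDiffAt ℝ 1 v p₀ := by
    apply ContDiffAt.prodMk
    · exact contDiff_snd.contDiffAt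
    · exact ((hQ₁a p₀.1 trivial).contDiffAt).comp p₀ contDiff_fst.contDiffAt
  obtain ⟨K, t, ht, hlip⟩ := hvC.exists_lipschitzOnWith
  -- the two solutions
  set f : ℝ → ℝ × ℝ := fun τ => (φ τ, deriv φ τ) with hfdef
  set g : ℝ → ℝ × ℝ := fun τ => (φ (-τ), -(deriv φ (-τ))) with hgdef
  have hfd : ∀ τ : ℝ, HasDerivAt f (v (f τ)) τ := fun τ =>
    (hφd τ).prodMk (hφ'd τ)
  have hgd : ∀ τ : ℝ, HasDerivAt g (v (g τ)) τ := by
    intro τ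
    have h1 : HasDerivAt (fun τ : ℝ => φ (-τ)) (-(deriv φ (-τ))) τ := by
      simpa [Function.comp_def] using (hφd (-τ)).comp τ (hasDerivAt_neg τ)
    have h2 : HasDerivAt (fun τ : ℝ => -(deriv φ (-τ))) (Q₁ (φ (-τ))) τ := by
      have := ((hφ'd (-τ)).comp τ (hasDerivAt_neg τ)).neg
      simpa [Function.comp_def, Pi.neg_def] using this
    exact h1.prodMk h2
  have hfc : ContinuousAt f 0 := (hfd 0).continuousAt
  have hgc : ContinuousAt g 0 := (hgd 0).continuousAt
  have hf0 : f 0 = p₀ := rfl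
  have hg0 : g 0 = p₀ := by simp [hgdef, hp₀, hinit]
  have hfmem : ∀ᶠ τ in 𝓝 (0 : ℝ), f τ ∈ t := hfc (hf0 ▸ ht)
  have hgmem : ∀ᶠ τ in 𝓝 (0 : ℝ), g τ ∈ t := hgc (hg0 ▸ ht)
  have huniq : f =ᶠ[𝓝 (0 : ℝ)] g :=
    ODE_solution_unique_of_eventually (v := fun _ => v) (s := fun _ => t)
      (Filter.Eventually.of_forall fun _ => hlip)
      (hfmem.mono fun τ hτ => ⟨hfd τ, hτ⟩)
      (hgmem.mono fun τ hτ => ⟨hgd τ, hτ⟩)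
      (hf0.trans hg0.symm)
  have heven : (F ∘ φ) =ᶠ[𝓝 (0 : ℝ)] fun τ => (F ∘ φ) (-τ) := by
    filter_upwards [huniq] with τ hτ
    have : φ τ = φ (-τ) := congrArg Prod.fst hτ
    simp [Function.comp, this]
  intro k hk
  have hodd : Odd (2 * k - 1) := by
    obtain ⟨m, rfl⟩ := Nat.exists_eq_add_of_le hk
    exact ⟨m, by omega⟩
  have h1 := heven.iteratedDeriv_eq (2 * k - 1)
  rw [iteratedDeriv_comp_neg, neg_zero, hodd.neg_one_pow, neg_one_smul] at h1
  linarith
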